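/- Let λ and r⁻¹ be positive integers with λr ∈ ℕ. For k = (k₁,k₂) ∈ {0,…,r⁻¹−1}², let g_k = (2π/λ)(k₁,k₂) and let T_k ⊂ T³ be the periodic array of vertical tubes T_k = {x ∈ T³ : dist_{T²}((x₁,x₂), g_k + (2π/(λr))ℤ²) ≤ 2π/(4λ)}. There exists a universal constant C_* ≥ 1 with the following property: if P ⊂ T³ is a union of at most N sets, each of which is contained in the closed (2π/λ)-neighborhood of a curve in T³ of length at most 4π/(λr), and if C_* N r ≤ 1, then there exists a shift k₀ ∈ {0,…,r⁻¹−1}² such that T_{k₀} ∩ P = ∅. -/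

import Mathlib

noncomputable section

/-- The circle `ℝ/2πℤ`. -/
abbrev Torus : Type := AddCircle (2 * Real.pi)

/-- The 3-dimensional torus `𝕋³`. -/
abbrev Torus3 : Type := Fin 3 → Torus

/-- The periodic array of vertical tubes of radius `2π/(4λ)` with shift `k`:
`T_k = {x | dist_{𝕋²}((x₁,x₂), g_k + (2π/(λr))ℤ²) ≤ 2π/(4λ)}`, with `g_k = (2π/λ)k` and
`r = rinv⁻¹`. -/
def tube (lam rinv : ℕ) (k : Fin 2 → ℕ) : Set Torus3 :=
  {x | ∃ m : Fin 2 → ℤ,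
    (dist (x 0) (((2 * Real.pi / lam * (k 0 : ℝ) + 2 * Real.pi * rinv / lam * (m 0 : ℝ)) : ℝ)
        : Torus))^2 +
    (dist (x 1) (((2 * Real.pi / lam * (k 1 : ℝ) + 2 * Real.pi * rinv / lam * (m 1 : ℝ)) : ℝ)
        : Torus))^2
      ≤ (2 * Real.pi / (4 * lam))^2}

lemma torus_coe_eq_coe_iff {u v : ℝ} :
    ((u : ℝ) : Torus) = ((v : ℝ) : Torus) ↔ ∃ n : ℤ, u - v = n * (2 * Real.pi) := by
  rw [← sub_eq_zero, ← AddCircle.coe_sub, AddCircle.coe_eq_zero_iff]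
  constructor
  · rintro ⟨n, hn⟩; exact ⟨n, by rw [← hn]; simp [zsmul_eq_mul]⟩
  · rintro ⟨n, hn⟩; exact ⟨n, by rw [hn]; simp [zsmul_eq_mul]⟩

lemma torus_dist_coe {u v : ℝ} :
    dist ((u : ℝ) : Torus) ((v : ℝ) : Torus)
      = |u - v - round ((2 * Real.pi)⁻¹ * (u - v)) * (2 * Real.pi)| := by
  rw [dist_eq_norm, ← AddCircle.coe_sub, AddCircle.norm_eq]

lemma torus_dist_eq_of {u v : ℝ} (h1 : -Real.pi ≤ u - v) (h2 : u - v < Real.pi) :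
    dist ((u : ℝ) : Torus) ((v : ℝ) : Torus) = |u - v| := by
  have hpi := Real.pi_pos
  have h2pi : (0:ℝ) < 2 * Real.pi := by linarith
  rw [torus_dist_coe]
  have he : (2 * Real.pi)⁻¹ * (u - v) = (u - v) / (2 * Real.pi) := by ring
  have : round ((2 * Real.pi)⁻¹ * (u - v)) = 0 := by
    rw [round_eq_zero_iff, he]
    constructor
    · rw [le_div_iff₀ h2pi]; linarith
    · rw [div_lt_iff₀ h2pi]; linarith
  rw [this]; ring_nf

lemma int_eq_of_dvd_of_lt {r a b : ℕ} (ha : a < r) (hb : b < r)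
    (h : (r : ℤ) ∣ (a : ℤ) - b) : a = b := by
  rcases h with ⟨c, hc⟩
  have h1 : -(r:ℤ) < (a:ℤ) - b := by omega
  have h2 : (a:ℤ) - b < r := by omega
  rw [hc] at h1 h2
  have hc0 : c = 0 := by
    rcases lt_trichotomy c 0 with h | h | h
    · nlinarith
    · exact h
    · nlinarith
  rw [hc0, mul_zero] at hc; omega

lemma circle_count (lam : ℕ) (hlam : 0 < lam) (q : Torus) (ρ : ℝ) (hρ : 0 ≤ ρ) :
    ∃ F : Finset Torus, (F.card : ℝ) ≤ ρ * lam / Real.pi + 1 ∧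
      ∀ a : ℤ, dist ((2 * Real.pi / lam * (a : ℝ) : ℝ) : Torus) q ≤ ρ →
        ((2 * Real.pi / lam * (a : ℝ) : ℝ) : Torus) ∈ F := by
  have hpi := Real.pi_pos
  have h2pi : (0:ℝ) < 2 * Real.pi := by linarith
  have hlamR : (0:ℝ) < lam := by exact_mod_cast hlam
  set δ : ℝ := 2 * Real.pi / lam with hδdef
  have hδ : 0 < δ := by positivity
  have hδlam : δ * lam = 2 * Real.pi := div_mul_cancel₀ _ (ne_of_gt hlamR)
  obtain ⟨qr, rfl⟩ := Quotient.exists_rep q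
  refine ⟨(Finset.Icc ⌈(qr - ρ) / δ⌉ ⌊(qr + ρ) / δ⌋).image (fun a : ℤ => ((δ * a : ℝ) : Torus)),
    ?_, ?_⟩
  · calc ((Finset.image _ _).card : ℝ) ≤ ((Finset.Icc ⌈(qr - ρ) / δ⌉ ⌊(qr + ρ) / δ⌋).card : ℝ) := by
          exact_mod_cast Finset.card_image_le
    _ ≤ ρ * lam / Real.pi + 1 := by
        rw [Int.card_Icc]
        rcases le_or_gt (⌊(qr + ρ) / δ⌋ + 1 - ⌈(qr - ρ) / δ⌉) 0 with h | h
        · rw [Int.toNat_of_nonpos h]; simp; positivity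
        · have h5 : (((⌊(qr + ρ) / δ⌋ + 1 - ⌈(qr - ρ) / δ⌉).toNat : ℕ) : ℝ)
              = (⌊(qr + ρ) / δ⌋ : ℝ) + 1 - (⌈(qr - ρ) / δ⌉ : ℝ) := by
            have := Int.toNat_of_nonneg (le_of_lt h)
            exact_mod_cast congrArg (fun z : ℤ => (z : ℝ)) this
          rw [h5]
          have h1 : (⌊(qr + ρ) / δ⌋ : ℝ) ≤ (qr + ρ) / δ := Int.floor_le _
          have h2 : (qr - ρ) / δ ≤ (⌈(qr - ρ) / δ⌉ : ℝ) := Int.le_ceil _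
          have h3 : (qr + ρ) / δ - (qr - ρ) / δ = 2 * ρ / δ := by ring
          have h4 : 2 * ρ / δ = ρ * lam / Real.pi := by
            rw [hδdef]; field_simp
          linarith
  · intro a ha
    set w : ℤ := ⌊(δ * a - qr + Real.pi) / (2 * Real.pi)⌋ with hw
    set a' : ℤ := a - lam * w with ha'
    have key : ((δ * (a' : ℝ) : ℝ) : Torus) = ((δ * a : ℝ) : Torus) := by
      rw [torus_coe_eq_coe_iff]
      refine ⟨-w, ?_⟩
      push_cast [ha']
      linear_combination (-(w:ℝ)) * hδlam
    have hb1 : 2 * Real.pi * w ≤ δ * a - qr + Real.pi := by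
      have := Int.floor_le ((δ * a - qr + Real.pi) / (2 * Real.pi))
      rw [← hw] at this
      calc 2 * Real.pi * w ≤ 2 * Real.pi * ((δ * a - qr + Real.pi) / (2 * Real.pi)) := by
            apply mul_le_mul_of_nonneg_left this (le_of_lt h2pi)
      _ = δ * a - qr + Real.pi := by field_simp
    have hb2 : δ * a - qr + Real.pi < 2 * Real.pi * (w + 1) := by
      have := Int.lt_floor_add_one ((δ * a - qr + Real.pi) / (2 * Real.pi))
      rw [← hw] at this
      calc δ * a - qr + Real.pi = 2 * Real.pi * ((δ * a - qr + Real.pi) / (2 * Real.pi)) := by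
            field_simp
      _ < 2 * Real.pi * (w + 1) := by
            apply mul_lt_mul_of_pos_left _ h2pi; linarith
    have ha'val : δ * (a' : ℝ) = δ * a - 2 * Real.pi * w := by
      push_cast [ha']
      linear_combination (-(w:ℝ)) * hδlam
    have hd1 : -Real.pi ≤ δ * (a' : ℝ) - qr := by rw [ha'val]; linarith
    have hd2 : δ * (a' : ℝ) - qr < Real.pi := by rw [ha'val]; linarith
    have hdist : dist ((δ * (a' : ℝ) : ℝ) : Torus) ((qr : ℝ) : Torus) = |δ * a' - qr| :=
      torus_dist_eq_of hd1 hd2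
    have hle : |δ * (a' : ℝ) - qr| ≤ ρ := by
      rw [← hdist, key]; exact ha
    rw [abs_le] at hle
    rw [← key]
    apply Finset.mem_image_of_mem
    rw [Finset.mem_Icc]
    constructor
    · rw [Int.ceil_le, div_le_iff₀ hδ]; linarith [hle.1]
    · rw [Int.le_floor, le_div_iff₀ hδ]; linarith [hle.2]

/-- The key counting lemma: the set of shifts `k` whose tube family comes within `2π/λ` of a
curve of length at most `4πr/λ` has cardinality at most `242 r⁻¹`. -/
lemma bad_card (lam rinv : ℕ) (hlam : 0 < lam) (hrinv : 0 < rinv) (hdvd : rinv ∣ lam)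
    (γ : ℝ → Torus3)
    (hvar : eVariationOn γ (Set.Icc 0 1) ≤ ENNReal.ofReal (4 * Real.pi * rinv / lam)) :
    ∃ Bad : Finset (Fin 2 → ℕ), Bad.card ≤ 242 * rinv ∧
      ∀ k : Fin 2 → ℕ, (∀ i, k i < rinv) →
        (∃ x ∈ tube lam rinv k, ∃ t ∈ Set.Icc (0:ℝ) 1, dist x (γ t) ≤ 2 * Real.pi / lam) →
        k ∈ Bad := by
  classical
  have hpi := Real.pi_pos
  have hlamR : (0:ℝ) < lam := by exact_mod_cast hlam
  have hrinvR : (0:ℝ) < rinv := by exact_mod_cast hrinv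
  set δ : ℝ := 2 * Real.pi / lam with hδdef
  have hδ : 0 < δ := by positivity
  have hδlam : δ * lam = 2 * Real.pi := div_mul_cancel₀ _ (ne_of_gt hlamR)
  set e : Fin 2 → Fin 3 := ![0, 1] with he
  set K : Finset (Fin 2 → ℕ) := Fintype.piFinset (fun _ : Fin 2 => Finset.range rinv) with hK
  set Bad : Finset (Fin 2 → ℕ) := K.filter
    (fun k => ∃ x ∈ tube lam rinv k, ∃ t ∈ Set.Icc (0:ℝ) 1, dist x (γ t) ≤ 2 * Real.pi / lam)
    with hBad
  refine ⟨Bad, ?_, ?_⟩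
  swap
  · intro k hk hex
    rw [hBad, Finset.mem_filter]
    exact ⟨by rw [hK, Fintype.mem_piFinset]; intro a; exact Finset.mem_range.mpr (hk a), hex⟩
  -- witnesses
  have hrange : ∀ k ∈ Bad, ∀ i, k i < rinv := by
    intro k hk i
    rw [hBad, Finset.mem_filter, hK, Fintype.mem_piFinset] at hk
    exact Finset.mem_range.mp (hk.1 i)
  have hW : ∀ k : Fin 2 → ℕ, ∃ (t : ℝ) (n : Fin 2 → ℤ), k ∈ Bad →
      t ∈ Set.Icc (0:ℝ) 1 ∧ (∀ j, (rinv : ℤ) ∣ n j - k j) ∧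
      (∀ j : Fin 2,
        dist (((2 * Real.pi / lam * ((n j : ℤ) : ℝ) : ℝ)) : Torus) (γ t (e j)) ≤ 5 * δ / 4) := by
    intro k
    by_cases hk : k ∈ Bad
    swap
    · exact ⟨0, 0, fun h => absurd h hk⟩
    obtain ⟨-, x, hx, t, ht, hxt⟩ := Finset.mem_filter.mp hk
    obtain ⟨m, hm⟩ := hx
    refine ⟨t, fun j => (k j : ℤ) + rinv * m j, fun _ => ⟨ht, fun j => ⟨m j, by push_cast; ring⟩,
      ?_⟩⟩
    have hq : (0:ℝ) ≤ 2 * Real.pi / (4 * lam) := by positivity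
    have hd0 : dist (x 0)
        (((2 * Real.pi / lam * (k 0 : ℝ) + 2 * Real.pi * rinv / lam * (m 0 : ℝ)) : ℝ) : Torus)
        ≤ 2 * Real.pi / (4 * lam) := by
      have hsq : dist (x 0)
          (((2 * Real.pi / lam * (k 0 : ℝ) + 2 * Real.pi * rinv / lam * (m 0 : ℝ)) : ℝ) : Torus) ^ 2
          ≤ (2 * Real.pi / (4 * lam)) ^ 2 := by
        nlinarith [sq_nonneg (dist (x 1)
          (((2 * Real.pi / lam * (k 1 : ℝ) + 2 * Real.pi * rinv / lam * (m 1 : ℝ)) : ℝ) : Torus))]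
      exact (pow_le_pow_iff_left₀ dist_nonneg hq (by norm_num : (2:ℕ) ≠ 0)).mp hsq
    have hd1 : dist (x 1)
        (((2 * Real.pi / lam * (k 1 : ℝ) + 2 * Real.pi * rinv / lam * (m 1 : ℝ)) : ℝ) : Torus)
        ≤ 2 * Real.pi / (4 * lam) := by
      have hsq : dist (x 1)
          (((2 * Real.pi / lam * (k 1 : ℝ) + 2 * Real.pi * rinv / lam * (m 1 : ℝ)) : ℝ) : Torus) ^ 2
          ≤ (2 * Real.pi / (4 * lam)) ^ 2 := by
        nlinarith [sq_nonneg (dist (x 0)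
          (((2 * Real.pi / lam * (k 0 : ℝ) + 2 * Real.pi * rinv / lam * (m 0 : ℝ)) : ℝ) : Torus))]
      exact (pow_le_pow_iff_left₀ dist_nonneg hq (by norm_num : (2:ℕ) ≠ 0)).mp hsq
    have hquarter : 2 * Real.pi / (4 * lam) = δ / 4 := by rw [hδdef]; ring
    intro j
    have hrew : (2 * Real.pi / lam * (((k j : ℤ) + rinv * m j : ℤ) : ℝ) : ℝ)
        = 2 * Real.pi / lam * (k j : ℝ) + 2 * Real.pi * rinv / lam * (m j : ℝ) := by
      push_cast; ring
    have hxj : dist (x (e j))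
        (((2 * Real.pi / lam * (((k j : ℤ) + rinv * m j : ℤ) : ℝ) : ℝ)) : Torus) ≤ δ / 4 := by
      rw [hrew, ← hquarter]
      fin_cases j
      · simpa [he] using hd0
      · simpa [he] using hd1
    have hgj : dist (x (e j)) (γ t (e j)) ≤ δ := by
      calc dist (x (e j)) (γ t (e j)) ≤ dist x (γ t) := dist_le_pi_dist x (γ t) (e j)
      _ ≤ 2 * Real.pi / lam := hxt
      _ = δ := by rw [hδdef]
    calc dist (((2 * Real.pi / lam * (((k j : ℤ) + rinv * m j : ℤ) : ℝ) : ℝ)) : Torus) (γ t (e j))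
        ≤ dist (((2 * Real.pi / lam * (((k j : ℤ) + rinv * m j : ℤ) : ℝ) : ℝ)) : Torus) (x (e j))
          + dist (x (e j)) (γ t (e j)) := dist_triangle _ _ _
    _ ≤ δ / 4 + δ := by rw [dist_comm] at hxj; linarith [hxj, hgj]
    _ = 5 * δ / 4 := by ring
  choose tf nf hprop using hW
  set c : (Fin 2 → ℕ) → Fin 2 → Torus :=
    fun k j => (((2 * Real.pi / lam * ((nf k j : ℤ) : ℝ) : ℝ)) : Torus) with hc
  -- injectivity of centers
  have hinj : ∀ k ∈ Bad, ∀ k' ∈ Bad, (∀ j, c k j = c k' j) → k = k' := by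
    intro k hk k' hk' hcc
    funext j
    have := hcc j
    rw [hc] at this
    simp only at this
    rw [torus_coe_eq_coe_iff] at this
    obtain ⟨z, hz⟩ := this
    have hzz : (2 * Real.pi) * ((nf k j : ℝ) - (nf k' j : ℝ)) / lam = z * (2 * Real.pi) := by
      rw [← hz]; field_simp
    have hnn : ((nf k j : ℝ)) - (nf k' j : ℝ) = (z : ℝ) * lam := by
      field_simp at hzz
      nlinarith [hzz, hpi]
    have hnnz : (nf k j : ℤ) - nf k' j = z * lam := by exact_mod_cast hnn
    have hdvd1 : (rinv : ℤ) ∣ nf k j - nf k' j := by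
      rw [hnnz]
      obtain ⟨d, hd⟩ := hdvd
      exact ⟨z * d, by rw [hd]; push_cast; ring⟩
    have h1 := (hprop k hk).2.1 j
    have h2 := (hprop k' hk').2.1 j
    have : (rinv : ℤ) ∣ (k j : ℤ) - k' j := by
      have hre : ((k j : ℤ) - k' j) = (nf k j - nf k' j) - (nf k j - (k j : ℤ))
          + (nf k' j - (k' j : ℤ)) := by ring
      rw [hre]
      exact dvd_add (dvd_sub hdvd1 h1) h2
    exact int_eq_of_dvd_of_lt (hrange k hk j) (hrange k' hk' j) this
  -- distance transfer
  have htrans : ∀ k ∈ Bad, ∀ k' ∈ Bad, ∀ j : Fin 2,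
      dist (c k j) (c k' j) - 5 * δ / 2 ≤ dist (γ (tf k) (e j)) (γ (tf k') (e j)) := by
    intro k hk k' hk' j
    have h1 := (hprop k hk).2.2 j
    have h2 := (hprop k' hk').2.2 j
    have t1 : dist (c k j) (c k' j) ≤ dist (c k j) (γ (tf k) (e j))
        + dist (γ (tf k) (e j)) (γ (tf k') (e j)) + dist (γ (tf k') (e j)) (c k' j) :=
      dist_triangle4 _ _ _ _
    rw [dist_comm (γ (tf k') (e j))] at t1
    rw [hc]
    simp only
    linarith [h1, h2, t1]
  -- maximal separated subset
  set sep : Finset (Fin 2 → ℕ) → Prop :=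
    (fun A => ∀ k ∈ A, ∀ k' ∈ A, k ≠ k' → ∃ j, 5 * δ < dist (c k j) (c k' j)) with hsepdef
  set 𝒜 : Finset (Finset (Fin 2 → ℕ)) := Bad.powerset.filter sep with h𝒜
  have hemp : ∅ ∈ 𝒜 := by
    rw [h𝒜, Finset.mem_filter]
    refine ⟨Finset.empty_mem_powerset _, ?_⟩
    simp only [hsepdef]
    intro k hk
    simp at hk
  obtain ⟨Sel, hSelA, hmax⟩ := 𝒜.exists_max_image Finset.card ⟨∅, hemp⟩
  rw [h𝒜, Finset.mem_filter, Finset.mem_powerset] at hSelA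
  obtain ⟨hSelB, hsep⟩ := hSelA
  simp only [hsepdef] at hsep
  -- every bad k is near some selected s
  have hnear : ∀ k ∈ Bad, ∃ s ∈ Sel, ∀ j, dist (c k j) (c s j) ≤ 5 * δ := by
    intro k hk
    by_contra hcon
    push_neg at hcon
    have hknot : k ∉ Sel := by
      intro hkS
      obtain ⟨j, hj⟩ := hcon k hkS
      simp at hj
      linarith
    have hins : insert k Sel ∈ 𝒜 := by
      rw [h𝒜, Finset.mem_filter, Finset.mem_powerset]
      constructor
      · exact Finset.insert_subset hk hSelB
      · simp only [hsepdef]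
        intro a ha b hb hab
        rcases Finset.mem_insert.mp ha with rfl | ha'
        · rcases Finset.mem_insert.mp hb with rfl | hb'
          · exact absurd rfl hab
          · exact hcon b hb'
        · rcases Finset.mem_insert.mp hb with rfl | hb'
          · obtain ⟨j, hj⟩ := hcon a ha'
            exact ⟨j, by rwa [dist_comm]⟩
          · exact hsep a ha' b hb' hab
    have := hmax _ hins
    rw [Finset.card_insert_of_notMem hknot] at this
    omega
  -- injectivity of tf on Sel
  have htinj : ∀ k ∈ Sel, ∀ k' ∈ Sel, k ≠ k' → tf k ≠ tf k' := by
    intro k hk k' hk' hne heq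
    obtain ⟨j, hj⟩ := hsep k hk k' hk' hne
    have := htrans k (hSelB hk) k' (hSelB hk') j
    rw [heq, dist_self] at this
    linarith
  -- Sel.card ≤ 2 * rinv
  have hSelcard : Sel.card ≤ 2 * rinv := by
    rcases le_or_gt Sel.card 1 with h1 | h1
    · omega
    · set n := Sel.card with hn
      set T : Finset ℝ := Sel.image tf with hT
      have hTcard : T.card = n := by
        rw [hT, hn]
        apply Finset.card_image_of_injOn
        intro a ha b hb hab
        by_contra hne
        exact htinj a ha b hb hne hab
      set emb := T.orderEmbOfFin hTcard with hemb
      have hembT : ∀ i : Fin n, emb i ∈ T := fun i => Finset.orderEmbOfFin_mem T hTcard i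
      have hTmem : ∀ y ∈ T, ∃ s ∈ Sel, tf s = y := by
        intro y hy
        rw [hT] at hy
        obtain ⟨s, hs, hsy⟩ := Finset.mem_image.mp hy
        exact ⟨s, hs, hsy⟩
      have hTicc : ∀ y ∈ T, y ∈ Set.Icc (0:ℝ) 1 := by
        intro y hy
        obtain ⟨s, hs, rfl⟩ := hTmem y hy
        exact (hprop s (hSelB hs)).1
      set u : ℕ → ℝ := fun i => if h : i < n then emb ⟨i, h⟩ else 1 with hu
      have humem : ∀ i, u i ∈ Set.Icc (0:ℝ) 1 := by
        intro i
        simp only [hu]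
        by_cases h : i < n
        · rw [dif_pos h]
          exact hTicc _ (hembT ⟨i, h⟩)
        · rw [dif_neg h]
          norm_num
      have humono : Monotone u := by
        intro i j hij
        simp only [hu]
        by_cases hi : i < n
        · by_cases hj : j < n
          · rw [dif_pos hi, dif_pos hj]
            exact emb.monotone (by exact hij)
          · rw [dif_pos hi, dif_neg hj]
            exact (hTicc _ (hembT ⟨i, hi⟩)).2
        · have hjn : ¬ j < n := by omega
          rw [dif_neg hi, dif_neg hjn]
      have hterm : ∀ i ∈ Finset.range (n - 1),
          ENNReal.ofReal (5 * δ / 2) ≤ edist (γ (u (i+1))) (γ (u i)) := by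
        intro i hi
        rw [Finset.mem_range] at hi
        have hi1 : i < n := by omega
        have hi2 : i + 1 < n := by omega
        have hui : u i = emb ⟨i, hi1⟩ := by simp only [hu]; exact dif_pos hi1
        have hui1 : u (i+1) = emb ⟨i+1, hi2⟩ := by simp only [hu]; exact dif_pos hi2
        obtain ⟨s, hs, hts⟩ := hTmem _ (hembT ⟨i, hi1⟩)
        obtain ⟨s', hs', hts'⟩ := hTmem _ (hembT ⟨i+1, hi2⟩)
        have hlt : emb ⟨i, hi1⟩ < emb ⟨i+1, hi2⟩ := by
          apply emb.strictMono
          exact Fin.mk_lt_mk.mpr (by omega)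
        have hne : s ≠ s' := by
          intro hss
          rw [hss, hts'] at hts
          rw [hts] at hlt
          exact lt_irrefl _ hlt
        obtain ⟨j, hj⟩ := hsep s hs s' hs' hne
        have := htrans s (hSelB hs) s' (hSelB hs') j
        have hco : 5 * δ / 2 ≤ dist (γ (tf s) (e j)) (γ (tf s') (e j)) := by linarith
        have hpd : dist (γ (tf s) (e j)) (γ (tf s') (e j)) ≤ dist (γ (tf s)) (γ (tf s')) :=
          dist_le_pi_dist _ _ _
        rw [edist_dist]
        apply ENNReal.ofReal_le_ofReal
        rw [hui, hui1, ← hts, ← hts']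
        calc 5 * δ / 2 ≤ dist (γ (tf s)) (γ (tf s')) := le_trans hco hpd
        _ = dist (γ (tf s')) (γ (tf s)) := dist_comm _ _
      have hsum : ((n - 1 : ℕ) : ENNReal) * ENNReal.ofReal (5 * δ / 2)
          ≤ ENNReal.ofReal (4 * Real.pi * rinv / lam) := by
        calc ((n - 1 : ℕ) : ENNReal) * ENNReal.ofReal (5 * δ / 2)
            = ∑ _ ∈ Finset.range (n - 1), ENNReal.ofReal (5 * δ / 2) := by
              rw [Finset.sum_const, nsmul_eq_mul, Finset.card_range]
        _ ≤ ∑ i ∈ Finset.range (n - 1), edist (γ (u (i+1))) (γ (u i)) :=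
              Finset.sum_le_sum hterm
        _ ≤ eVariationOn γ (Set.Icc 0 1) := eVariationOn.sum_le (f := γ) (n := n - 1) humono humem
        _ ≤ ENNReal.ofReal (4 * Real.pi * rinv / lam) := hvar
      have hreal : ((n - 1 : ℕ) : ℝ) * (5 * δ / 2) ≤ 4 * Real.pi * rinv / lam := by
        rw [← ENNReal.ofReal_natCast (n-1), ← ENNReal.ofReal_mul (by positivity)] at hsum
        exact (ENNReal.ofReal_le_ofReal_iff (by positivity)).mp hsum
      have hvv : 4 * Real.pi * (rinv : ℝ) / lam = 2 * rinv * δ := by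
        rw [hδdef]; ring
      rw [hvv] at hreal
      have hn1 : ((n - 1 : ℕ) : ℝ) = (n : ℝ) - 1 := by
        have : 1 ≤ n := by omega
        push_cast [this]
        ring
      rw [hn1] at hreal
      have hr1 : (1:ℝ) ≤ rinv := by exact_mod_cast hrinv
      have h5 : (n : ℝ) - 1 ≤ (4/5) * rinv := by nlinarith [hδ]
      have : (n : ℝ) ≤ 2 * rinv := by linarith
      exact_mod_cast this
  -- Bad.card ≤ 121 * Sel.card
  have hBadcard : Bad.card ≤ 121 * Sel.card := by
    have hsub : Bad ⊆ Sel.biUnion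
        (fun s => Bad.filter (fun k => ∀ j, dist (c k j) (c s j) ≤ 5 * δ)) := by
      intro k hk
      rw [Finset.mem_biUnion]
      obtain ⟨s, hs, hns⟩ := hnear k hk
      exact ⟨s, hs, Finset.mem_filter.mpr ⟨hk, hns⟩⟩
    have hfil : ∀ s ∈ Sel,
        (Bad.filter (fun k => ∀ j, dist (c k j) (c s j) ≤ 5 * δ)).card ≤ 121 := by
      intro s hs
      obtain ⟨F0, hF0card, hF0⟩ := circle_count lam hlam (c s 0) (5 * δ) (by positivity)
      obtain ⟨F1, hF1card, hF1⟩ := circle_count lam hlam (c s 1) (5 * δ) (by positivity)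
      have hb : 5 * δ * (lam : ℝ) / Real.pi + 1 = 11 := by
        rw [hδdef]
        field_simp
        ring
      have hF0c : F0.card ≤ 11 := by
        have : (F0.card : ℝ) ≤ 11 := by rw [← hb]; exact hF0card
        exact_mod_cast this
      have hF1c : F1.card ≤ 11 := by
        have : (F1.card : ℝ) ≤ 11 := by rw [← hb]; exact hF1card
        exact_mod_cast this
      calc (Bad.filter (fun k => ∀ j, dist (c k j) (c s j) ≤ 5 * δ)).card
          ≤ (F0 ×ˢ F1).card := by
            apply Finset.card_le_card_of_injOn (fun k => (c k 0, c k 1))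
            · intro k hk
              rw [Finset.mem_coe, Finset.mem_filter] at hk
              rw [Finset.mem_coe, Finset.mem_product]
              exact ⟨hF0 (nf k 0) (hk.2 0), hF1 (nf k 1) (hk.2 1)⟩
            · intro k hk k' hk' hkk
              rw [Finset.coe_filter, Set.mem_setOf_eq] at hk hk'
              apply hinj k hk.1 k' hk'.1
              intro j
              fin_cases j
              · exact congrArg Prod.fst hkk
              · exact congrArg Prod.snd hkk
      _ ≤ 121 := by
            rw [Finset.card_product]
            calc F0.card * F1.card ≤ 11 * 11 := Nat.mul_le_mul hF0c hF1c
            _ = 121 := by norm_num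
    calc Bad.card ≤ (Sel.biUnion
          (fun s => Bad.filter (fun k => ∀ j, dist (c k j) (c s j) ≤ 5 * δ))).card :=
          Finset.card_le_card hsub
    _ ≤ ∑ s ∈ Sel, (Bad.filter (fun k => ∀ j, dist (c k j) (c s j) ≤ 5 * δ)).card :=
          Finset.card_biUnion_le
    _ ≤ ∑ _s ∈ Sel, 121 := Finset.sum_le_sum hfil
    _ = Sel.card * 121 := by rw [Finset.sum_const, smul_eq_mul]
    _ = 121 * Sel.card := by ring
  omega

/-- **Placing straight pipes which avoid bent pipes.** There is a universal constant `C_*`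
such that if `P ⊆ 𝕋³` is covered by at most `N` sets, each contained in the closed
`2π/λ`-neighborhood of a curve of length at most `4π/(λr)`, and `C_* N r ≤ 1`, then some
shifted periodic family of straight tubes `T_{k₀}` is disjoint from `P`. -/
theorem pipe_dodging :
    ∃ Cstar : ℝ, 1 ≤ Cstar ∧
      ∀ (lam rinv : ℕ), 0 < lam → 0 < rinv → rinv ∣ lam →
      ∀ (N : ℕ) (P : Set Torus3) (S : Fin N → Set Torus3) (γ : Fin N → ℝ → Torus3),
        P ⊆ ⋃ i, S i →
        (∀ i, ContinuousOn (γ i) (Set.Icc 0 1) ∧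
          eVariationOn (γ i) (Set.Icc 0 1) ≤ ENNReal.ofReal (4 * Real.pi * rinv / lam) ∧
          S i ⊆ {x | ∃ t ∈ Set.Icc (0:ℝ) 1, dist x (γ i t) ≤ 2 * Real.pi / lam}) →
        Cstar * N * (rinv : ℝ)⁻¹ ≤ 1 →
        ∃ k₀ : Fin 2 → ℕ, (∀ i, k₀ i < rinv) ∧ tube lam rinv k₀ ∩ P = ∅ := by
  classical
  refine ⟨1000, by norm_num, ?_⟩
  intro lam rinv hlam hrinv hdvd N P S γ hP hS hC
  have hrinvR : (0:ℝ) < rinv := by exact_mod_cast hrinv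
  -- N is small
  have hN : 1000 * N ≤ rinv := by
    have h1 : (1000 : ℝ) * N * (rinv : ℝ)⁻¹ * rinv ≤ 1 * rinv :=
      mul_le_mul_of_nonneg_right hC (le_of_lt hrinvR)
    rw [mul_assoc, inv_mul_cancel₀ (ne_of_gt hrinvR), mul_one, one_mul] at h1
    exact_mod_cast h1
  choose Bad hBadcard hBadmem using fun i : Fin N =>
    bad_card lam rinv hlam hrinv hdvd (γ i) (hS i).2.1
  set K : Finset (Fin 2 → ℕ) := Fintype.piFinset (fun _ : Fin 2 => Finset.range rinv) with hK
  have hKcard : K.card = rinv * rinv := by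
    rw [hK, Fintype.card_piFinset]
    simp [Finset.card_range, sq]
  set BigBad : Finset (Fin 2 → ℕ) := Finset.univ.biUnion Bad with hBB
  have hBBcard : BigBad.card ≤ N * (242 * rinv) := by
    calc BigBad.card ≤ ∑ i : Fin N, (Bad i).card := Finset.card_biUnion_le
    _ ≤ ∑ _i : Fin N, 242 * rinv := Finset.sum_le_sum (fun i _ => hBadcard i)
    _ = N * (242 * rinv) := by rw [Finset.sum_const, smul_eq_mul, Finset.card_univ,
        Fintype.card_fin]
  have hlt : BigBad.card < K.card := by
    rw [hKcard]
    rcases Nat.eq_zero_or_pos N with rfl | hNpos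
    · have h0 := hBBcard
      have hpos := Nat.mul_pos hrinv hrinv
      omega
    · have h1 : 242 * N < rinv := by
        have h2 : 242 * N < 1000 * N := Nat.mul_lt_mul_of_lt_of_le (by norm_num)
          (le_refl N) hNpos
        omega
      calc BigBad.card ≤ N * (242 * rinv) := hBBcard
      _ = (242 * N) * rinv := by ring
      _ < rinv * rinv := (Nat.mul_lt_mul_right hrinv).mpr h1
  -- find a good shift
  have hgood : ∃ k₀ ∈ K, k₀ ∉ BigBad := by
    by_contra hcon
    push_neg at hcon
    have : K ⊆ BigBad := fun k hk => hcon k hk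
    exact absurd (Finset.card_le_card this) (by omega)
  obtain ⟨k₀, hk₀K, hk₀⟩ := hgood
  have hk₀range : ∀ i, k₀ i < rinv := by
    intro i
    rw [hK, Fintype.mem_piFinset] at hk₀K
    exact Finset.mem_range.mp (hk₀K i)
  refine ⟨k₀, hk₀range, ?_⟩
  rw [Set.eq_empty_iff_forall_notMem]
  rintro x ⟨hxT, hxP⟩
  obtain ⟨i, hxSi⟩ := Set.mem_iUnion.mp (hP hxP)
  have hx' : ∃ t ∈ Set.Icc (0:ℝ) 1, dist x (γ i t) ≤ 2 * Real.pi / lam := (hS i).2.2 hxSi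
  have : k₀ ∈ Bad i := hBadmem i k₀ hk₀range ⟨x, hxT, hx'⟩
  exact hk₀ (Finset.mem_biUnion.mpr ⟨i, Finset.mem_univ i, this⟩)
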